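/- Let (M_m)_m be a POVM on ℂ², let √M_m denote the positive semidefinite square root of M_m, and let |±x⟩ denote the eigenvectors of σ_x. Define the Lüders (uncorrected) disturbance D_I(M, σ_x) as the conditional Shannon entropy H(𝕏|𝕏') of the joint distribution p(b, b') = (1/2)·Σ_m |⟨b'x|√M_m|bx⟩|² for b, b' ∈ {+,−}. Then g(N(M, σ_z))² + g(D_I(M, σ_x))² ≤ 1. -/

import Mathlib

open Matrix
open scoped ComplexOrder

noncomputable section

/-- The binary-entropy-type function `h(x) = -((1+x)/2)·log₂((1+x)/2) - ((1-x)/2)·log₂((1-x)/2)`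
(with the convention `0·log₂ 0 = 0`, automatic since `Real.logb 2 0 = 0`). -/
def hFun (x : ℝ) : ℝ :=
  -(((1 + x) / 2) * Real.logb 2 ((1 + x) / 2)) - ((1 - x) / 2) * Real.logb 2 ((1 - x) / 2)

/-- `g : [0,1] → [0,1]` is the inverse of `h` on `[0,1]`. -/
def gFun : ℝ → ℝ := Function.invFunOn hFun (Set.Icc 0 1)

/-- The (real) quadratic form `⟨v|M|v⟩`. -/
def qform {d : ℕ} (M : Matrix (Fin d) (Fin d) ℂ) (v : Fin d → ℂ) : ℝ :=
  (star v ⬝ᵥ M.mulVec v).re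

/-- `v` is an orthonormal basis (family) of `ℂ^d`. -/
def IsONB {d : ℕ} (v : Fin d → Fin d → ℂ) : Prop :=
  ∀ i j, star (v i) ⬝ᵥ v j = if i = j then 1 else 0

/-- A POVM: a finite family of positive semidefinite matrices summing to the identity. -/
def IsPOVM {d : ℕ} {ι : Type*} [Fintype ι] (M : ι → Matrix (Fin d) (Fin d) ℂ) : Prop :=
  (∀ m, (M m).PosSemidef) ∧ ∑ m, M m = 1

/-- A density matrix: positive semidefinite with trace 1. -/
def IsDensity {d : ℕ} (ρ : Matrix (Fin d) (Fin d) ℂ) : Prop :=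
  ρ.PosSemidef ∧ ρ.trace = 1

/-- The noise `N(M,A) = -Σ_{m,a} p(m,a)·log₂(p(m,a)/p(m))` with `p(m,a) = (1/d)·⟨a|M_m|a⟩`
and `p(m) = (1/d)·Tr[M_m]`, for an observable `A` with orthonormal eigenbasis `v`. -/
def noise {d : ℕ} {ι : Type*} [Fintype ι] (M : ι → Matrix (Fin d) (Fin d) ℂ)
    (v : Fin d → Fin d → ℂ) : ℝ :=
  -∑ m, ∑ a, ((1 / (d : ℝ)) * qform (M m) (v a)) *
      Real.logb 2 (((1 / (d : ℝ)) * qform (M m) (v a)) / ((1 / (d : ℝ)) * (M m).trace.re))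

/-- `H(A|ρ) = -Σ_a ⟨a|ρ|a⟩·log₂⟨a|ρ|a⟩` for an observable with orthonormal eigenbasis `v`. -/
def Hobs {d : ℕ} (v : Fin d → Fin d → ℂ) (ρ : Matrix (Fin d) (Fin d) ℂ) : ℝ :=
  -∑ a, qform ρ (v a) * Real.logb 2 (qform ρ (v a))

/-- Conditional Shannon entropy `H(X|Y) = -Σ_{x,y} p(x,y)·log₂(p(x,y)/p(y))` of a finite joint
distribution, conditioning on the second variable. -/
def condEnt {X Y : Type*} [Fintype X] [Fintype Y] (p : X → Y → ℝ) : ℝ :=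
  -∑ x, ∑ y, p x y * Real.logb 2 (p x y / ∑ x', p x' y)

/-- Pauli matrix σ_x. -/
def σx : Matrix (Fin 2) (Fin 2) ℂ := !![0, 1; 1, 0]
/-- Pauli matrix σ_y. -/
def σy : Matrix (Fin 2) (Fin 2) ℂ := !![0, -Complex.I; Complex.I, 0]
/-- Pauli matrix σ_z. -/
def σz : Matrix (Fin 2) (Fin 2) ℂ := !![1, 0; 0, -1]

/-- `v·σ = v₁σ_x + v₂σ_y + v₃σ_z` for `v ∈ ℝ³`. -/
def vecσ (v : Fin 3 → ℝ) : Matrix (Fin 2) (Fin 2) ℂ :=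
  (v 0 : ℂ) • σx + (v 1 : ℂ) • σy + (v 2 : ℂ) • σz

/-- The canonical orthonormal eigenbasis of σ_z. -/
def basisZ : Fin 2 → Fin 2 → ℂ := fun i j => if i = j then 1 else 0

/-- The canonical orthonormal eigenbasis `|±x⟩` of σ_x. -/
def basisX : Fin 2 → Fin 2 → ℂ := fun i =>
  ![((1 / Real.sqrt 2 : ℝ) : ℂ),
    if i = 0 then ((1 / Real.sqrt 2 : ℝ) : ℂ) else (-(1 / Real.sqrt 2 : ℝ) : ℂ)]

/-- The positive semidefinite square root of a positive semidefinite matrix (the definition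
`Matrix.PosSemidef.sqrt` of the older Mathlib, removed since). -/
def Matrix.PosSemidef.sqrt {n : Type*} [Fintype n] [DecidableEq n] {A : Matrix n n ℂ}
    (hA : A.PosSemidef) : Matrix n n ℂ :=
  hA.1.eigenvectorUnitary.1 * diagonal ((↑) ∘ (√·) ∘ hA.1.eigenvalues) *
    (star hA.1.eigenvectorUnitary : Matrix n n ℂ)

/-- Eigenvalues `+1, -1` of a (nondegenerate) Pauli observable. -/
def pmEig : Fin 2 → ℂ := fun i => if i = 0 then 1 else -1

end

noncomputable section


lemma hFun_eq (x : ℝ) : hFun x =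
    (-(((1 + x) / 2) * Real.log ((1 + x) / 2)) - ((1 - x) / 2) * Real.log ((1 - x) / 2))
      / Real.log 2 := by
  unfold hFun Real.logb; ring

lemma continuous_hFun : Continuous hFun := by
  have : hFun = fun x => (-(((1 + x) / 2) * Real.log ((1 + x) / 2))
      - ((1 - x) / 2) * Real.log ((1 - x) / 2)) / Real.log 2 := funext hFun_eq
  rw [this]
  exact ((Real.continuous_mul_log.comp (by continuity)).neg.sub
    (Real.continuous_mul_log.comp (by continuity))).div_const _

lemma hasDerivAt_hFun (x : ℝ) (h1 : 0 < 1 + x) (h2 : 0 < 1 - x) :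
    HasDerivAt hFun ((Real.log ((1 - x) / 2) - Real.log ((1 + x) / 2)) / (2 * Real.log 2)) x := by
  have e : hFun = fun x => (-(((1 + x) / 2) * Real.log ((1 + x) / 2))
      - ((1 - x) / 2) * Real.log ((1 - x) / 2)) / Real.log 2 := funext hFun_eq
  rw [e]
  have d1 : HasDerivAt (fun x : ℝ => (1 + x) / 2) (1 / 2) x := by
    simpa using ((hasDerivAt_id x).const_add 1).div_const 2
  have d2 : HasDerivAt (fun x : ℝ => (1 - x) / 2) (-(1 / 2)) x := by
    have := ((hasDerivAt_id x).const_sub 1).div_const 2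
    exact this.congr_deriv (by ring)
  have m1 : HasDerivAt (fun x : ℝ => ((1 + x) / 2) * Real.log ((1 + x) / 2))
      ((Real.log ((1 + x) / 2) + 1) * (1 / 2)) x :=
    (Real.hasDerivAt_mul_log (by positivity)).comp x d1
  have m2 : HasDerivAt (fun x : ℝ => ((1 - x) / 2) * Real.log ((1 - x) / 2))
      ((Real.log ((1 - x) / 2) + 1) * (-(1 / 2))) x :=
    (Real.hasDerivAt_mul_log (by positivity)).comp x d2
  have := (m1.neg.sub m2).div_const (Real.log 2)
  exact this.congr_deriv (by ring)

lemma strictAntiOn_hFun : StrictAntiOn hFun (Set.Icc (0:ℝ) 1) := by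
  apply strictAntiOn_of_deriv_neg (convex_Icc 0 1) continuous_hFun.continuousOn
  intro x hx
  rw [interior_Icc] at hx
  have h1 : (0:ℝ) < 1 + x := by linarith [hx.1]
  have h2 : (0:ℝ) < 1 - x := by linarith [hx.2]
  rw [(hasDerivAt_hFun x h1 h2).deriv]
  have : Real.log ((1 - x) / 2) < Real.log ((1 + x) / 2) :=
    Real.log_lt_log (by positivity) (by linarith [hx.1])
  have hl2 : (0:ℝ) < Real.log 2 := Real.log_pos (by norm_num)
  apply div_neg_of_neg_of_pos <;> [linarith; positivity]

lemma hFun_zero : hFun 0 = 1 := by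
  have : Real.logb 2 ((1 + (0:ℝ)) / 2) = -1 := by
    rw [show ((1 + (0:ℝ)) / 2) = 2⁻¹ by norm_num, Real.logb_inv]
    simp [Real.logb_self_eq_one]
  unfold hFun
  rw [show ((1 - (0:ℝ)) / 2) = ((1 + (0:ℝ)) / 2) by norm_num, this]
  norm_num

lemma hFun_one : hFun 1 = 0 := by
  unfold hFun; norm_num

lemma hFun_mem {x : ℝ} (hx : x ∈ Set.Icc (0:ℝ) 1) : hFun x ∈ Set.Icc (0:ℝ) 1 := by
  constructor
  · rcases eq_or_lt_of_le hx.2 with h | h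
    · rw [h, hFun_one]
    · have := strictAntiOn_hFun hx (Set.mem_Icc.mpr ⟨zero_le_one, le_refl 1⟩) h
      rw [hFun_one] at this; linarith
  · rcases eq_or_lt_of_le hx.1 with h | h
    · rw [← h, hFun_zero]
    · have := strictAntiOn_hFun (Set.mem_Icc.mpr ⟨le_refl 0, zero_le_one⟩) hx h
      rw [hFun_zero] at this; linarith

lemma gFun_hFun {x : ℝ} (hx : x ∈ Set.Icc (0:ℝ) 1) : gFun (hFun x) = x :=
  strictAntiOn_hFun.injOn.leftInvOn_invFunOn hx

lemma gFun_le {x₀ y : ℝ} (hx₀ : x₀ ∈ Set.Icc (0:ℝ) 1) (hy : hFun x₀ ≤ y) (hy1 : y ≤ 1) :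
    gFun y ∈ Set.Icc (0:ℝ) x₀ := by
  have hsub : Set.Icc (0:ℝ) x₀ ⊆ Set.Icc 0 1 := Set.Icc_subset_Icc (le_refl _) hx₀.2
  have : y ∈ Set.Icc (hFun x₀) (hFun 0) := by
    rw [hFun_zero]; exact ⟨hy, hy1⟩
  obtain ⟨x, hxmem, hxy⟩ := intermediate_value_Icc' hx₀.1
    (continuous_hFun.continuousOn.mono hsub) this
  rw [← hxy, gFun_hFun (hsub hxmem)]
  exact hxmem


lemma psd2_facts {S : Matrix (Fin 2) (Fin 2) ℂ} (hS : S.PosSemidef) :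
    0 ≤ (S 0 0).re ∧ 0 ≤ (S 1 1).re ∧
      (S 0 1).re ^ 2 + (S 0 1).im ^ 2 ≤ (S 0 0).re * (S 1 1).re ∧
      S 0 0 = ((S 0 0).re : ℂ) ∧ S 1 1 = ((S 1 1).re : ℂ) ∧
      S 1 0 = star (S 0 1) := by
  have herm := hS.1
  have h10 : S 1 0 = star (S 0 1) := by
    conv_lhs => rw [← herm]
    rfl
  have q00 := hS.dotProduct_mulVec_nonneg ![1, 0]
  have q11 := hS.dotProduct_mulVec_nonneg ![0, 1]
  rw [Complex.nonneg_iff] at q00 q11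
  have e00 : (star ![(1:ℂ), 0] ⬝ᵥ S.mulVec ![1, 0]) = S 0 0 := by
    simp [Matrix.mulVec, dotProduct, Fin.sum_univ_two]
  have e11 : (star ![(0:ℂ), 1] ⬝ᵥ S.mulVec ![0, 1]) = S 1 1 := by
    simp [Matrix.mulVec, dotProduct, Fin.sum_univ_two]
  rw [e00] at q00; rw [e11] at q11
  have ha : 0 ≤ (S 0 0).re := q00.1
  have hd : 0 ≤ (S 1 1).re := q11.1
  have ha' : S 0 0 = ((S 0 0).re : ℂ) := by
    apply Complex.ext <;> simp [← q00.2]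
  have hd' : S 1 1 = ((S 1 1).re : ℂ) := by
    apply Complex.ext <;> simp [← q11.2]
  refine ⟨ha, hd, ?_, ha', hd', h10⟩
  -- the determinant-type inequality
  set a := (S 0 0).re
  set d := (S 1 1).re
  set c := S 0 1
  have key : ∀ t : ℝ, 0 ≤ a * t^2 * Complex.normSq c - 2 * t * Complex.normSq c + d := by
    intro t
    have q := hS.dotProduct_mulVec_nonneg ![-(t:ℂ) * c, 1]
    rw [Complex.nonneg_iff] at q
    have : (star ![-(t:ℂ) * c, 1] ⬝ᵥ S.mulVec ![-(t:ℂ) * c, 1]).re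
        = a * t^2 * Complex.normSq c - 2 * t * Complex.normSq c + d := by
      simp only [Matrix.mulVec, dotProduct, Fin.sum_univ_two, Matrix.cons_val_zero,
        Matrix.cons_val_one, Matrix.head_cons, Pi.star_apply, h10, ha', hd']
      simp [Complex.normSq_apply, Complex.ext_iff, Complex.add_re, Complex.mul_re,
        Complex.mul_im]
      ring
    rw [this] at q
    exact q.1
  have hnsq : Complex.normSq c = c.re^2 + c.im^2 := by
    simp [Complex.normSq_apply]; ring
  rcases eq_or_lt_of_le ha with ha0 | ha0
  · -- a = 0 : show normSq c = 0
    by_contra hlt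
    push_neg at hlt
    have hc : 0 < Complex.normSq c := by nlinarith [Complex.normSq_nonneg c]
    have hk := key ((d + 1) / (2 * Complex.normSq c))
    rw [← ha0] at hk
    have he : 2 * ((d + 1) / (2 * Complex.normSq c)) * Complex.normSq c = d + 1 := by
      field_simp
    nlinarith [hk, he]
  · have h2 := key (1 / a)
    rw [hnsq] at h2
    have e1 : a * (1/a)^2 * (c.re^2 + c.im^2) = (c.re^2 + c.im^2)/a := by
      field_simp
    have h3 : (c.re^2 + c.im^2)/a ≤ d := by
      rw [e1] at h2
      have e2 : 2 * (1/a) * (c.re^2 + c.im^2) = 2 * ((c.re^2 + c.im^2)/a) := by ring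
      rw [e2] at h2
      linarith
    have := (div_le_iff₀ ha0).mp h3
    linarith
/-- composed function; its convexity is the analytic core -/
def fFun (u : ℝ) : ℝ := hFun (Real.sqrt (4 * u * (1 - u)))

def tau (u : ℝ) : ℝ := Real.sqrt (4 * u * (1 - u))

lemma tau_mem {u : ℝ} (hu : u ∈ Set.Ioo (0:ℝ) 2⁻¹) : 0 < tau u ∧ tau u < 1 := by
  obtain ⟨h0, h1⟩ := hu
  have hw : 0 < 4 * u * (1 - u) := by nlinarith
  have hw1 : 4 * u * (1 - u) < 1 := by nlinarith
  constructor
  · exact Real.sqrt_pos.mpr hw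
  · have := Real.sqrt_lt_sqrt hw.le hw1
    simpa [tau] using this

lemma hasDerivAt_tau {u : ℝ} (hu : u ∈ Set.Ioo (0:ℝ) 2⁻¹) :
    HasDerivAt tau ((4 - 8 * u) / (2 * tau u)) u := by
  have hw : 0 < 4 * u * (1 - u) := by obtain ⟨h0,h1⟩ := hu; nlinarith
  have dw : HasDerivAt (fun u : ℝ => 4 * u * (1 - u)) (4 - 8 * u) u := by
    have : HasDerivAt (fun u : ℝ => 4 * u * (1 - u)) (4 * 1 * (1 - id u) + 4 * id u * -1) u :=
      ((hasDerivAt_id u).const_mul 4).mul ((hasDerivAt_id u).const_sub 1)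
    exact this.congr_deriv (by simp only [id_eq]; ring)
  have := (Real.hasDerivAt_sqrt hw.ne').comp u dw
  exact this.congr_deriv (by unfold tau; field_simp)

def fD (u : ℝ) : ℝ :=
  (1 - 2*u) / tau u * ((Real.log ((1 - tau u) / 2) - Real.log ((1 + tau u) / 2)) / Real.log 2)

lemma hasDerivAt_fFun {u : ℝ} (hu : u ∈ Set.Ioo (0:ℝ) 2⁻¹) :
    HasDerivAt fFun (fD u) u := by
  obtain ⟨ht0, ht1⟩ := tau_mem hu
  have h := (hasDerivAt_hFun (tau u) (by linarith) (by linarith)).comp u (hasDerivAt_tau hu)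
  have e : fFun = hFun ∘ tau := rfl
  rw [e]
  refine h.congr_deriv ?_
  have hsq : tau u ^ 2 = 4 * u * (1 - u) := by
    have hw : 0 ≤ 4 * u * (1 - u) := by obtain ⟨h0,h1⟩ := hu; nlinarith
    exact Real.sq_sqrt hw
  unfold fD
  field_simp
  ring

lemma tau_sq {u : ℝ} (hu : u ∈ Set.Ioo (0:ℝ) 2⁻¹) : tau u ^ 2 = 4 * u * (1 - u) := by
  have hw : 0 ≤ 4 * u * (1 - u) := by obtain ⟨h0,h1⟩ := hu; nlinarith
  exact Real.sq_sqrt hw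

lemma hasDerivAt_fD {u : ℝ} (hu : u ∈ Set.Ioo (0:ℝ) 2⁻¹) :
    HasDerivAt fD
      (2 * ((Real.log ((1 + tau u)/2) - Real.log ((1 - tau u)/2)) - 2 * tau u)
        / (tau u ^ 3 * Real.log 2)) u := by
  obtain ⟨ht0, ht1⟩ := tau_mem hu
  have htau := hasDerivAt_tau hu
  have hsq := tau_sq hu
  have hne : tau u ≠ 0 := ht0.ne'
  have h1t : (1 : ℝ) - tau u ≠ 0 := by linarith
  have h1t' : (1 : ℝ) + tau u ≠ 0 := by positivity
  have hlog2 : Real.log 2 ≠ 0 := by positivity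
  have hs : (1 - 2*u)^2 = 1 - tau u ^ 2 := by linear_combination hsq
  have dA : HasDerivAt (fun u => (1 - 2*u) / tau u) (-2 / tau u ^3) u := by
    have dnum : HasDerivAt (fun u : ℝ => 1 - 2*u) (-2) u := by
      simpa using ((hasDerivAt_id u).const_mul 2).const_sub 1
    refine (dnum.div htau hne).congr_deriv ?_
    field_simp
    linear_combination (-4) * hsq
  have d1 : HasDerivAt (fun u => (1 - tau u) / 2) (-((4 - 8*u) / (2 * tau u)) / 2) u :=
    (htau.const_sub 1).div_const 2
  have d2 : HasDerivAt (fun u => (1 + tau u) / 2) ((4 - 8*u) / (2 * tau u) / 2) u :=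
    (htau.const_add 1).div_const 2
  have l1 : HasDerivAt (fun u => Real.log ((1 - tau u) / 2))
      ((8*u - 4) / (2 * tau u * (1 - tau u))) u := by
    refine ((Real.hasDerivAt_log (by positivity : ((1 - tau u)/2 : ℝ) ≠ 0)).comp u d1).congr_deriv ?_
    field_simp
    ring
  have l2 : HasDerivAt (fun u => Real.log ((1 + tau u) / 2))
      ((4 - 8*u) / (2 * tau u * (1 + tau u))) u := by
    refine ((Real.hasDerivAt_log (by positivity : ((1 + tau u)/2 : ℝ) ≠ 0)).comp u d2).congr_deriv ?_
    field_simp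
  have dB := l1.sub l2
  have e : fD = fun u => ((1 - 2*u) / tau u *
      (Real.log ((1 - tau u) / 2) - Real.log ((1 + tau u) / 2))) / Real.log 2 := by
    funext v; unfold fD; ring
  rw [e]
  refine ((dA.mul dB).div_const (Real.log 2)).congr_deriv ?_
  field_simp
  simp only [Pi.sub_apply]
  linear_combination (-8 * tau u) * hsq


lemma log_ratio_ge {t : ℝ} (h0 : 0 ≤ t) (h1 : t < 1) :
    2 * t ≤ Real.log (1 + t) - Real.log (1 - t) := by
  set w : ℝ → ℝ := fun x => Real.log (1 + x) - Real.log (1 - x) - 2 * x with hw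
  have mono : MonotoneOn w (Set.Ico (0:ℝ) 1) := by
    apply monotoneOn_of_deriv_nonneg (convex_Ico 0 1)
    · apply ContinuousOn.sub (ContinuousOn.sub ?_ ?_) (by fun_prop)
      · exact (Real.continuousOn_log.comp (by fun_prop) (fun x hx => by
          simp only [Set.mem_Ico] at hx; intro h; simp at h; nlinarith [hx.1]))
      · exact (Real.continuousOn_log.comp (by fun_prop) (fun x hx => by
          simp only [Set.mem_Ico] at hx; intro h; simp at h; nlinarith [hx.2]))
    · rw [interior_Ico]
      intro x hx
      obtain ⟨hx0, hx1⟩ := hx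
      have d : HasDerivAt w (1/(1+x) + 1/(1-x) - 2) x := by
        have d1 : HasDerivAt (fun x : ℝ => Real.log (1 + x)) (1/(1+x)) x := by
          have := (Real.hasDerivAt_log (by linarith : (1:ℝ) + x ≠ 0)).comp x
            ((hasDerivAt_id x).const_add 1)
          exact this.congr_deriv (by ring)
        have d2 : HasDerivAt (fun x : ℝ => Real.log (1 - x)) (-(1/(1-x))) x := by
          have := (Real.hasDerivAt_log (by linarith : (1:ℝ) - x ≠ 0)).comp x
            ((hasDerivAt_id x).const_sub 1)
          have e := this.congr_deriv (show (1-x)⁻¹ * (-1) = -(1/(1-x)) by field_simp)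
          exact e
        have := (d1.sub d2).sub ((hasDerivAt_id x).const_mul 2)
        exact this.congr_deriv (by ring)
      exact d.differentiableAt.differentiableWithinAt
    · rw [interior_Ico]
      intro x hx
      obtain ⟨hx0, hx1⟩ := hx
      have d : HasDerivAt w (1/(1+x) + 1/(1-x) - 2) x := by
        have d1 : HasDerivAt (fun x : ℝ => Real.log (1 + x)) (1/(1+x)) x := by
          have := (Real.hasDerivAt_log (by linarith : (1:ℝ) + x ≠ 0)).comp x
            ((hasDerivAt_id x).const_add 1)
          exact this.congr_deriv (by ring)
        have d2 : HasDerivAt (fun x : ℝ => Real.log (1 - x)) (-(1/(1-x))) x := by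
          have := (Real.hasDerivAt_log (by linarith : (1:ℝ) - x ≠ 0)).comp x
            ((hasDerivAt_id x).const_sub 1)
          exact this.congr_deriv (show (1-x)⁻¹ * (-1) = -(1/(1-x)) by field_simp)
        have := (d1.sub d2).sub ((hasDerivAt_id x).const_mul 2)
        exact this.congr_deriv (by ring)
      rw [d.deriv]
      have h1x : (0:ℝ) < 1 + x := by linarith
      have h2x : (0:ℝ) < 1 - x := by linarith
      rw [div_add_div _ _ h1x.ne' h2x.ne', sub_nonneg, le_div_iff₀ (by positivity)]
      nlinarith [sq_nonneg x]
  have := mono (Set.mem_Ico.mpr ⟨le_refl 0, by norm_num⟩) (Set.mem_Ico.mpr ⟨h0, h1⟩) h0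
  simp only [hw] at this
  norm_num at this
  linarith

lemma convexOn_fFun : ConvexOn ℝ (Set.Icc (0:ℝ) 2⁻¹) fFun := by
  have hcont : Continuous fFun := by
    apply continuous_hFun.comp
    exact Real.continuous_sqrt.comp (by fun_prop)
  apply convexOn_of_deriv2_nonneg (convex_Icc 0 2⁻¹) hcont.continuousOn
  · rw [interior_Icc]
    exact fun u hu => (hasDerivAt_fFun hu).differentiableAt.differentiableWithinAt
  · rw [interior_Icc]
    intro u hu
    have ev : deriv fFun =ᶠ[nhds u] fD := by
      filter_upwards [isOpen_Ioo.mem_nhds hu] with v hv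
      exact (hasDerivAt_fFun hv).deriv
    exact ((hasDerivAt_fD hu).differentiableAt.congr_of_eventuallyEq ev).differentiableWithinAt
  · rw [interior_Icc]
    intro u hu
    have ev : deriv fFun =ᶠ[nhds u] fD := by
      filter_upwards [isOpen_Ioo.mem_nhds hu] with v hv
      exact (hasDerivAt_fFun hv).deriv
    have h2 : deriv^[2] fFun u = deriv fD u := by
      rw [show deriv^[2] fFun = deriv (deriv fFun) from rfl]
      exact ev.deriv_eq
    rw [h2, (hasDerivAt_fD hu).deriv]
    obtain ⟨ht0, ht1⟩ := tau_mem hu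
    have hlog : Real.log ((1 + tau u)/2) - Real.log ((1 - tau u)/2)
        = Real.log (1 + tau u) - Real.log (1 - tau u) := by
      rw [Real.log_div (by linarith) (by norm_num), Real.log_div (by linarith) (by norm_num)]
      ring
    have key := log_ratio_ge ht0.le ht1
    have hnum : 0 ≤ Real.log ((1 + tau u)/2) - Real.log ((1 - tau u)/2) - 2 * tau u := by
      rw [hlog]; linarith
    have hden : 0 < tau u ^ 3 * Real.log 2 := by
      have := Real.log_pos (by norm_num : (1:ℝ) < 2); positivity
    positivity

/-! ### Entrywise computations for `S * S` with `S` Hermitian given by real parameters -/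

section Entries
variable {S : Matrix (Fin 2) (Fin 2) ℂ} {a d x y : ℝ}

lemma sq00 (ea : S 0 0 = (a:ℂ)) (e01 : S 0 1 = (x:ℂ) + (y:ℂ)*Complex.I)
    (e10 : S 1 0 = (x:ℂ) - (y:ℂ)*Complex.I) :
    (S*S) 0 0 = ((a^2 + x^2 + y^2 : ℝ) : ℂ) := by
  rw [Matrix.mul_apply, Fin.sum_univ_two, ea, e01, e10]
  apply Complex.ext <;>
    simp [Complex.add_re, Complex.mul_re, Complex.mul_im, Complex.add_im,
      Complex.sub_re, Complex.sub_im, ← Complex.ofReal_pow] <;> ring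

lemma sq11 (ed : S 1 1 = (d:ℂ)) (e01 : S 0 1 = (x:ℂ) + (y:ℂ)*Complex.I)
    (e10 : S 1 0 = (x:ℂ) - (y:ℂ)*Complex.I) :
    (S*S) 1 1 = ((d^2 + x^2 + y^2 : ℝ) : ℂ) := by
  rw [Matrix.mul_apply, Fin.sum_univ_two, ed, e01, e10]
  apply Complex.ext <;>
    simp [Complex.add_re, Complex.mul_re, Complex.mul_im, Complex.add_im,
      Complex.sub_re, Complex.sub_im, ← Complex.ofReal_pow] <;> ring

lemma sq01 (ea : S 0 0 = (a:ℂ)) (ed : S 1 1 = (d:ℂ))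
    (e01 : S 0 1 = (x:ℂ) + (y:ℂ)*Complex.I) :
    (S*S) 0 1 = (((a+d)*x : ℝ) : ℂ) + (((a+d)*y : ℝ) : ℂ)*Complex.I := by
  rw [Matrix.mul_apply, Fin.sum_univ_two, ea, ed, e01]
  push_cast
  ring

lemma qform_basisZ0 (M : Matrix (Fin 2) (Fin 2) ℂ) : qform M (basisZ 0) = (M 0 0).re := by
  unfold qform basisZ
  simp [Matrix.mulVec, dotProduct, Fin.sum_univ_two]

lemma qform_basisZ1 (M : Matrix (Fin 2) (Fin 2) ℂ) : qform M (basisZ 1) = (M 1 1).re := by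
  unfold qform basisZ
  simp [Matrix.mulVec, dotProduct, Fin.sum_univ_two]

lemma xval (b b' : Fin 2) (ea : S 0 0 = (a:ℂ)) (ed : S 1 1 = (d:ℂ))
    (e01 : S 0 1 = (x:ℂ) + (y:ℂ)*Complex.I) (e10 : S 1 0 = (x:ℂ) - (y:ℂ)*Complex.I) :
    ‖star (basisX b') ⬝ᵥ (S.mulVec (basisX b))‖^2
      = (if b = b' then (a + d + (if b = 0 then 2*x else -(2*x)))^2/4
         else ((a-d)^2 + 4*y^2)/4) := by
  have h2 : Real.sqrt 2 ≠ 0 := by positivity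
  have hs2 : Real.sqrt 2 * Real.sqrt 2 = 2 := Real.mul_self_sqrt (by norm_num)
  have hz : ∀ z : ℂ, ‖z‖^2 = z.re^2 + z.im^2 := by
    intro z
    rw [Complex.sq_norm, Complex.normSq_apply]
    ring
  fin_cases b <;> fin_cases b' <;>
    (simp only [basisX, Matrix.mulVec, dotProduct, Fin.sum_univ_two, Pi.star_apply,
      Matrix.cons_val_zero, Matrix.cons_val_one, Matrix.head_cons, ea, ed, e01, e10,
      if_true, if_false, hz] <;>
    norm_num [Complex.add_re, Complex.mul_re, Complex.mul_im, Complex.add_im,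
      Complex.sub_re, Complex.sub_im, Complex.ofReal_re, Complex.ofReal_im] <;>
    field_simp <;> ring_nf <;>
    rw [show Real.sqrt 2 ^ 4 = 4 by
      rw [show (4:ℕ) = 2*2 from rfl, pow_mul, Real.sq_sqrt (by norm_num : (0:ℝ) ≤ 2)]
      norm_num] <;> ring)

end Entries

/-! ### Scalar layer -/

lemma hFun_neg (x : ℝ) : hFun (-x) = hFun x := by
  unfold hFun
  rw [show (1 + -x) = 1 - x by ring, show (1 - -x) = 1 + x by ring]
  ring

lemma hFun_abs (x : ℝ) : hFun |x| = hFun x := by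
  rcases abs_cases x with ⟨h, _⟩ | ⟨h, _⟩ <;> rw [h]
  exact hFun_neg x

lemma noise_term (q0 q1 : ℝ) (h0 : 0 ≤ q0) (h1 : 0 ≤ q1) :
    -((1/2 * q0) * Real.logb 2 ((1/2*q0)/(1/2*(q0+q1)))
      + (1/2 * q1) * Real.logb 2 ((1/2*q1)/(1/2*(q0+q1))))
      = ((q0+q1)/2) * hFun (if q0 + q1 = 0 then 0 else (q0 - q1)/(q0+q1)) := by
  rcases eq_or_lt_of_le (add_nonneg h0 h1) with hP | hP
  · have hq0 : q0 = 0 := by linarith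
    have hq1 : q1 = 0 := by linarith
    simp [hq0, hq1]
  · rw [if_neg hP.ne']
    have e0 : (1/2*q0)/(1/2*(q0+q1)) = q0/(q0+q1) := mul_div_mul_left _ _ (by norm_num)
    have e1 : (1/2*q1)/(1/2*(q0+q1)) = q1/(q0+q1) := mul_div_mul_left _ _ (by norm_num)
    have a0 : (1 + (q0-q1)/(q0+q1))/2 = q0/(q0+q1) := by field_simp; ring
    have a1 : (1 - (q0-q1)/(q0+q1))/2 = q1/(q0+q1) := by field_simp; ring
    rw [e0, e1]
    unfold hFun
    rw [a0, a1]
    field_simp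
    ring

/-- the per-outcome scalar inequality package -/
lemma step2 (a d x y : ℝ) (ha : 0 ≤ a) (hd : 0 ≤ d) (hdet : x^2 + y^2 ≤ a*d) :
    (if a^2+d^2+2*x^2+2*y^2 = 0 then (0:ℝ)
      else 2*(((a-d)^2+4*y^2)/4)/(a^2+d^2+2*x^2+2*y^2)) ∈ Set.Icc (0:ℝ) 2⁻¹ ∧
    fFun (if a^2+d^2+2*x^2+2*y^2 = 0 then (0:ℝ)
      else 2*(((a-d)^2+4*y^2)/4)/(a^2+d^2+2*x^2+2*y^2))
      ≤ hFun (if a^2+d^2+2*x^2+2*y^2 = 0 then (0:ℝ)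
        else (a^2-d^2)/(a^2+d^2+2*x^2+2*y^2)) ∧
    hFun (if a^2+d^2+2*x^2+2*y^2 = 0 then (0:ℝ)
        else (a^2-d^2)/(a^2+d^2+2*x^2+2*y^2)) ≤ 1 ∧
    (if a^2+d^2+2*x^2+2*y^2 = 0 then (0:ℝ)
      else 2*(((a-d)^2+4*y^2)/4)/(a^2+d^2+2*x^2+2*y^2)) * ((a^2+d^2+2*x^2+2*y^2)/2)
      = ((a-d)^2+4*y^2)/4 := by
  set P := a^2+d^2+2*x^2+2*y^2 with hPdef
  set E := ((a-d)^2+4*y^2)/4 with hEdef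
  have hPnn : 0 ≤ P := by positivity
  have hEnn : 0 ≤ E := by positivity
  have k1 : 4*E ≤ P := by rw [hEdef, hPdef]; nlinarith
  rcases eq_or_ne P 0 with hP | hP
  · have hE : E = 0 := by linarith
    rw [if_pos hP, if_pos hP]
    have hf : fFun 0 = hFun 0 := by
      unfold fFun
      norm_num
    refine ⟨by norm_num, by rw [hf], ?_, by rw [hE]; ring⟩
    have := hFun_mem (Set.mem_Icc.mpr ⟨le_refl (0:ℝ), zero_le_one⟩)
    exact this.2
  · have hPpos : 0 < P := lt_of_le_of_ne hPnn (Ne.symm hP)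
    rw [if_neg hP, if_neg hP]
    set u := 2*E/P with hudef
    set t := (a^2-d^2)/P with htdef
    have hu0 : 0 ≤ u := by positivity
    have hu2 : u ≤ 2⁻¹ := by
      rw [hudef, div_le_iff₀ hPpos]
      linarith
    have key : (a^2-d^2)^2 ≤ 8*E*(P - 2*E) := by
      have expand : 8*E*(P-2*E) = ((a-d)^2+4*y^2)*((a+d)^2+4*x^2) := by
        rw [hEdef, hPdef]; ring
      rw [expand]
      nlinarith [sq_nonneg ((a-d)*x), sq_nonneg ((a+d)*y), sq_nonneg (x*y),
        sq_nonneg (a-d), sq_nonneg (a+d), sq_nonneg x, sq_nonneg y]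
    have ht2 : t^2 ≤ 4*u*(1-u) := by
      have e : 4*u*(1-u) = 8*E*(P-2*E)/P^2 := by
        rw [hudef]; field_simp; ring
      have e2 : t^2 = (a^2-d^2)^2/P^2 := by rw [htdef]; rw [div_pow]
      rw [e, e2]
      exact (div_le_div_iff_of_pos_right (by positivity)).mpr key
    have htau0 : 0 ≤ tau u := Real.sqrt_nonneg _
    have htau1 : tau u ≤ 1 := by
      calc tau u = Real.sqrt (4*u*(1-u)) := rfl
        _ ≤ Real.sqrt 1 := Real.sqrt_le_sqrt (by nlinarith [sq_nonneg (1 - 2*u)])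
        _ = 1 := by simp
    have habs : |t| ≤ tau u := by
      rw [← Real.sqrt_sq_eq_abs]
      exact Real.sqrt_le_sqrt ht2
    have hmem_t : |t| ∈ Set.Icc (0:ℝ) 1 := ⟨abs_nonneg _, habs.trans htau1⟩
    have hmem_tau : tau u ∈ Set.Icc (0:ℝ) 1 := ⟨htau0, htau1⟩
    have h1 : hFun (tau u) ≤ hFun |t| :=
      strictAntiOn_hFun.antitoneOn hmem_t hmem_tau habs
    have hft : fFun u = hFun (tau u) := rfl
    refine ⟨⟨hu0, hu2⟩, ?_, ?_, ?_⟩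
    · rw [hft, ← hFun_abs t]
      exact h1
    · rw [← hFun_abs t]
      exact (hFun_mem hmem_t).2
    · rw [hudef]
      field_simp

lemma condEnt_symm (ε : ℝ) :
    condEnt (fun b b' : Fin 2 => if b = b' then (1-ε)/2 else ε/2) = hFun (1 - 2*ε) := by
  unfold condEnt
  simp only [Fin.sum_univ_two]
  norm_num
  rw [show (1-ε)/2 + ε/2 = 1/2 by ring, show ε/2 + (1-ε)/2 = 1/2 by ring,
    show ((1-ε)/2)/(1/2 : ℝ) = 1-ε by ring, show (ε/2)/(1/2 : ℝ) = ε by ring]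
  unfold hFun
  rw [show (1 + (1 - 2*ε))/2 = 1-ε by ring, show (1 - (1 - 2*ε))/2 = ε by ring]
  ring

lemma Matrix.PosSemidef.posSemidef_sqrt {A : Matrix (Fin 2) (Fin 2) ℂ} (hA : A.PosSemidef) :
    hA.sqrt.PosSemidef := by
  unfold Matrix.PosSemidef.sqrt
  rw [Matrix.star_eq_conjTranspose]
  apply Matrix.PosSemidef.mul_mul_conjTranspose_same
  apply Matrix.PosSemidef.diagonal
  intro i
  simp only [Function.comp_apply, Pi.zero_apply]
  exact_mod_cast Real.sqrt_nonneg _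

lemma Matrix.PosSemidef.sqrt_mul_self {A : Matrix (Fin 2) (Fin 2) ℂ} (hA : A.PosSemidef) :
    hA.sqrt * hA.sqrt = A := by
  unfold Matrix.PosSemidef.sqrt
  set U := hA.1.eigenvectorUnitary
  have hU : (star U : Matrix (Fin 2) (Fin 2) ℂ) * U.1 = 1 := Unitary.coe_star_mul_self U
  calc U.1 * diagonal ((↑) ∘ (√·) ∘ hA.1.eigenvalues) * (star U : Matrix (Fin 2) (Fin 2) ℂ) *
        (U.1 * diagonal ((↑) ∘ (√·) ∘ hA.1.eigenvalues) * (star U : Matrix (Fin 2) (Fin 2) ℂ))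
      = U.1 * (diagonal ((↑) ∘ (√·) ∘ hA.1.eigenvalues) *
          ((star U : Matrix (Fin 2) (Fin 2) ℂ) * U.1) *
          diagonal ((↑) ∘ (√·) ∘ hA.1.eigenvalues)) * (star U : Matrix (Fin 2) (Fin 2) ℂ) := by
        simp only [Matrix.mul_assoc]
    _ = U.1 * diagonal (RCLike.ofReal ∘ hA.1.eigenvalues) * (star U : Matrix (Fin 2) (Fin 2) ℂ) := by
        rw [hU, Matrix.mul_one, diagonal_mul_diagonal]
        congr 3
        funext i
        simp only [Function.comp_apply]
        rw [← Complex.ofReal_mul, Real.mul_self_sqrt (hA.eigenvalues_nonneg i)]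
        rfl
    _ = A := (hA.1.spectral_theorem).symm

end

/-- For every POVM `M` on `ℂ²`, with the Lüders (uncorrected) disturbance `D_I(M,σ_x)` defined
as `H(𝕏|𝕏')` of `p(b,b') = (1/2)·Σ_m |⟨b'x|√M_m|bx⟩|²`, one has
`g(N(M,σ_z))² + g(D_I(M,σ_x))² ≤ 1`. -/
theorem stmt_16 {ι : Type*} [Fintype ι] (M : ι → Matrix (Fin 2) (Fin 2) ℂ)
    (hM : IsPOVM M) :
    gFun (noise M basisZ) ^ 2 +
      gFun (condEnt (fun b b' : Fin 2 =>
        (1 / 2 : ℝ) * ∑ m, ‖star (basisX b') ⬝ᵥ ((hM.1 m).sqrt.mulVec (basisX b))‖ ^ 2)) ^ 2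
      ≤ 1 := by
  classical
  -- real parameters of the square roots
  set A : ι → ℝ := fun m => (((hM.1 m).sqrt) 0 0).re with hAdef
  set D : ι → ℝ := fun m => (((hM.1 m).sqrt) 1 1).re with hDdef
  set X : ι → ℝ := fun m => (((hM.1 m).sqrt) 0 1).re with hXdef
  set Y : ι → ℝ := fun m => (((hM.1 m).sqrt) 0 1).im with hYdef
  have hfacts := fun m => psd2_facts (hM.1 m).posSemidef_sqrt
  have ea : ∀ m, ((hM.1 m).sqrt) 0 0 = ((A m : ℝ) : ℂ) := fun m => (hfacts m).2.2.2.1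
  have ed : ∀ m, ((hM.1 m).sqrt) 1 1 = ((D m : ℝ) : ℂ) := fun m => (hfacts m).2.2.2.2.1
  have e01 : ∀ m, ((hM.1 m).sqrt) 0 1 = ((X m : ℝ) : ℂ) + ((Y m : ℝ) : ℂ)*Complex.I :=
    fun m => (Complex.re_add_im _).symm
  have e10 : ∀ m, ((hM.1 m).sqrt) 1 0 = ((X m : ℝ) : ℂ) - ((Y m : ℝ) : ℂ)*Complex.I := by
    intro m
    rw [(hfacts m).2.2.2.2.2, e01 m]
    simp [Complex.ext_iff]
  have hdet : ∀ m, X m^2 + Y m^2 ≤ A m * D m := fun m => (hfacts m).2.2.1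
  have hA0 : ∀ m, 0 ≤ A m := fun m => (hfacts m).1
  have hD0 : ∀ m, 0 ≤ D m := fun m => (hfacts m).2.1
  have hMS : ∀ m, (hM.1 m).sqrt * (hM.1 m).sqrt = M m := fun m => (hM.1 m).sqrt_mul_self
  -- entries of M m
  have hM00 : ∀ m, (M m) 0 0 = ((A m^2 + X m^2 + Y m^2 : ℝ) : ℂ) := by
    intro m; rw [← hMS m]; exact sq00 (ea m) (e01 m) (e10 m)
  have hM11 : ∀ m, (M m) 1 1 = ((D m^2 + X m^2 + Y m^2 : ℝ) : ℂ) := by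
    intro m; rw [← hMS m]; exact sq11 (ed m) (e01 m) (e10 m)
  have hM01 : ∀ m, (M m) 0 1
      = (((A m + D m)*(X m) : ℝ) : ℂ) + (((A m + D m)*(Y m) : ℝ) : ℂ)*Complex.I := by
    intro m; rw [← hMS m]; exact sq01 (ea m) (ed m) (e01 m)
  -- sum constraints
  have c1 : ∑ m, (A m^2 + X m^2 + Y m^2) = 1 := by
    have h00 := congrFun (congrFun hM.2 0) 0
    rw [Matrix.sum_apply] at h00
    simp only [Matrix.one_apply_eq] at h00
    rw [Finset.sum_congr rfl (fun m _ => hM00 m)] at h00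
    exact_mod_cast h00
  have c2 : ∑ m, (D m^2 + X m^2 + Y m^2) = 1 := by
    have h11 := congrFun (congrFun hM.2 1) 1
    rw [Matrix.sum_apply] at h11
    simp only [Matrix.one_apply_eq] at h11
    rw [Finset.sum_congr rfl (fun m _ => hM11 m)] at h11
    exact_mod_cast h11
  have c3 : ∑ m, (A m + D m)*(X m) = 0 := by
    have h01 := congrFun (congrFun hM.2 0) 1
    rw [Matrix.sum_apply] at h01
    rw [Matrix.one_apply_ne (by norm_num : (0 : Fin 2) ≠ 1)] at h01
    rw [Finset.sum_congr rfl (fun m _ => hM01 m)] at h01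
    have := congrArg Complex.re h01
    rw [Complex.re_sum] at this
    simpa using this
  -- abbreviations
  set P : ι → ℝ := fun m => A m^2 + D m^2 + 2*X m^2 + 2*Y m^2 with hPdef
  set E : ι → ℝ := fun m => ((A m - D m)^2 + 4*Y m^2)/4 with hEdef
  set ε : ℝ := ∑ m, E m with hεdef
  have hPsum : ∑ m, P m = 2 := by
    have : ∑ m, P m = ∑ m, ((A m^2 + X m^2 + Y m^2) + (D m^2 + X m^2 + Y m^2)) :=
      Finset.sum_congr rfl (fun m _ => by rw [hPdef]; ring)
    rw [this, Finset.sum_add_distrib, c1, c2]; norm_num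
  have hP0 : ∀ m, 0 ≤ P m := fun m => by rw [hPdef]; positivity
  -- per-outcome scalar data
  have hstep := fun m => step2 (A m) (D m) (X m) (Y m) (hA0 m) (hD0 m) (hdet m)
  -- the noise
  have htr : ∀ m, (M m).trace.re
      = (A m^2 + X m^2 + Y m^2) + (D m^2 + X m^2 + Y m^2) := by
    intro m
    rw [Matrix.trace_fin_two, hM00 m, hM11 m]
    simp [← Complex.ofReal_pow]
  have hNeq : noise M basisZ = ∑ m, ((P m)/2) * hFun
      (if P m = 0 then (0:ℝ) else (A m^2 - D m^2)/(P m)) := by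
    unfold noise
    rw [← Finset.sum_neg_distrib]
    refine Finset.sum_congr rfl (fun m _ => ?_)
    rw [Fin.sum_univ_two]
    rw [qform_basisZ0, qform_basisZ1, hM00 m, hM11 m, htr m]
    simp only [Complex.ofReal_re, Nat.cast_ofNat]
    have := noise_term (A m^2 + X m^2 + Y m^2) (D m^2 + X m^2 + Y m^2)
      (by positivity) (by positivity)
    rw [show (1 : ℝ)/(2:ℝ) = 1/2 from rfl] at this
    rw [this]
    rw [show (A m^2 + X m^2 + Y m^2) + (D m^2 + X m^2 + Y m^2) = P m by rw [hPdef]; ring,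
      show (A m^2 + X m^2 + Y m^2) - (D m^2 + X m^2 + Y m^2) = A m^2 - D m^2 by ring]
  -- Jensen
  have hwsum : ∑ m, (P m)/2 = 1 := by rw [← Finset.sum_div, hPsum]; norm_num
  have hJ := convexOn_fFun.map_sum_le (t := Finset.univ)
    (w := fun m => (P m)/2)
    (p := fun m => if P m = 0 then (0:ℝ) else 2*(((A m - D m)^2+4*Y m^2)/4)/(P m))
    (fun m _ => by positivity) hwsum (fun m _ => (hstep m).1)
  have hsum_u : ∑ m, ((P m)/2) • (if P m = 0 then (0:ℝ)
      else 2*(((A m - D m)^2+4*Y m^2)/4)/(P m)) = ε := by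
    rw [hεdef]
    refine Finset.sum_congr rfl (fun m _ => ?_)
    rw [smul_eq_mul, mul_comm]
    simpa only [hEdef] using (hstep m).2.2.2
  rw [hsum_u] at hJ
  have hchain : fFun ε ≤ noise M basisZ := by
    rw [hNeq]
    refine hJ.trans ?_
    refine Finset.sum_le_sum (fun m _ => ?_)
    rw [smul_eq_mul]
    exact mul_le_mul_of_nonneg_left (hstep m).2.1 (by positivity)
  have hNle1 : noise M basisZ ≤ 1 := by
    rw [hNeq]
    calc ∑ m, ((P m)/2) * hFun (if P m = 0 then (0:ℝ) else (A m^2 - D m^2)/(P m))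
        ≤ ∑ m, ((P m)/2) * 1 :=
          Finset.sum_le_sum (fun m _ =>
            mul_le_mul_of_nonneg_left (hstep m).2.2.1 (by positivity))
      _ = 1 := by simp only [mul_one]; exact hwsum
  -- epsilon bounds
  have hE0 : ∀ m, 0 ≤ E m := fun m => by rw [hEdef]; positivity
  have hε0 : 0 ≤ ε := Finset.sum_nonneg (fun m _ => hE0 m)
  have hε12 : ε ≤ 1/2 := by
    have hper : ∀ m, E m ≤ (P m)/4 := by
      intro m
      have h4 := (hstep m).2.2.2
      have hu2 := (hstep m).1.2
      have hu0 := (hstep m).1.1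
      simp only [hEdef]
      rw [← h4]
      have := mul_le_mul_of_nonneg_right hu2 (by positivity : (0:ℝ) ≤ (P m)/2)
      calc (if P m = 0 then (0:ℝ) else 2*(((A m - D m)^2+4*Y m^2)/4)/(P m)) * ((P m)/2)
          ≤ 2⁻¹ * ((P m)/2) := this
        _ = (P m)/4 := by ring
    calc ε ≤ ∑ m, (P m)/4 := Finset.sum_le_sum (fun m _ => hper m)
      _ = 1/2 := by rw [← Finset.sum_div, hPsum]; norm_num
  -- the disturbance distribution
  have hpfun : (fun b b' : Fin 2 =>
        (1 / 2 : ℝ) * ∑ m, ‖star (basisX b') ⬝ᵥ ((hM.1 m).sqrt.mulVec (basisX b))‖ ^ 2)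
      = (fun b b' : Fin 2 => if b = b' then (1-ε)/2 else ε/2) := by
    funext b b'
    have hx := fun m => xval (S := (hM.1 m).sqrt) b b' (ea m) (ed m) (e01 m) (e10 m)
    rw [Finset.sum_congr rfl (fun m _ => hx m)]
    have hoff : ∑ m, ((A m - D m)^2 + 4*Y m^2)/4 = ε := by
      rw [hεdef]
    have hdiag0 : ∑ m, (A m + D m + 2*X m)^2/4 = 1 - ε := by
      have expand : ∀ m ∈ Finset.univ, (A m + D m + 2*X m)^2/4
          = ((A m^2 + X m^2 + Y m^2)/2 + (D m^2 + X m^2 + Y m^2)/2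
            + (A m + D m)*(X m)) - ((A m - D m)^2 + 4*Y m^2)/4 := by
        intro m _; ring
      rw [Finset.sum_congr rfl expand, Finset.sum_sub_distrib, Finset.sum_add_distrib,
        Finset.sum_add_distrib, ← Finset.sum_div, ← Finset.sum_div, c1, c2, c3, hoff]
      norm_num
    have hdiag1 : ∑ m, (A m + D m + -(2*X m))^2/4 = 1 - ε := by
      have expand : ∀ m ∈ Finset.univ, (A m + D m + -(2*X m))^2/4
          = ((A m^2 + X m^2 + Y m^2)/2 + (D m^2 + X m^2 + Y m^2)/2
            - (A m + D m)*(X m)) - ((A m - D m)^2 + 4*Y m^2)/4 := by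
        intro m _; ring
      rw [Finset.sum_congr rfl expand, Finset.sum_sub_distrib, Finset.sum_sub_distrib,
        Finset.sum_add_distrib, ← Finset.sum_div, ← Finset.sum_div, c1, c2, c3, hoff]
      norm_num
    fin_cases b <;> fin_cases b' <;>
      simp only [if_true, if_false] <;> norm_num <;>
      [rw [hdiag0]; rw [hoff]; rw [hoff]; rw [hdiag1]] <;> ring
  rw [hpfun, condEnt_symm]
  -- final arithmetic
  have hx0mem : Real.sqrt (4*ε*(1-ε)) ∈ Set.Icc (0:ℝ) 1 := by
    constructor
    · exact Real.sqrt_nonneg _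
    · calc Real.sqrt (4*ε*(1-ε)) ≤ Real.sqrt 1 :=
          Real.sqrt_le_sqrt (by nlinarith)
        _ = 1 := by simp
  have hlow : hFun (Real.sqrt (4*ε*(1-ε))) ≤ noise M basisZ := hchain
  have hgN := gFun_le hx0mem hlow hNle1
  have hgD : gFun (hFun (1 - 2*ε)) = 1 - 2*ε :=
    gFun_hFun (Set.mem_Icc.mpr ⟨by linarith, by linarith⟩)
  rw [hgD]
  have hsq : Real.sqrt (4*ε*(1-ε))^2 = 4*ε*(1-ε) := Real.sq_sqrt (by nlinarith)
  have h1 : gFun (noise M basisZ)^2 ≤ 4*ε*(1-ε) := by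
    rw [← hsq]
    exact pow_le_pow_left₀ hgN.1 hgN.2 2
  nlinarith
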